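/- Let λ₁, λ₂, λ₃ ∈ (0,1) satisfy λ₃ > (1−λ₁)(1−λ₂). Let (A₁(n))_{n∈ℕ}, (A₂(n))_{n∈ℕ}, (A₃(n))_{n∈ℕ} be {0,1}-valued random variables, all jointly independent, with P(A_i(n)=1) = λ_i for each i and n. Define Q : ℕ → Ω → ℕ by Q(0) = 0 and Q(n+1) = Q(n) + A₃(n) − S(n), where S(n) = 1 if Q(n) + A₃(n) ≥ 1 and A₁(n) = 0 and A₂(n) = 0, and S(n) = 0 otherwise. Then almost surely Q(n)/n → λ₃ − (1−λ₁)(1−λ₂) > 0 as n → ∞; in particular Q(n) → ∞ almost surely. -/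

import Mathlib

open MeasureTheory Filter ProbabilityTheory Topology

/-- Deterministic Lindley-recursion lemma: if `q (n+1) = max (q n + z n) 0`, `q 0 = 0`,
and the Cesàro averages of `z` converge to `μ > 0`, then `q n / n → μ`. -/
lemma lindley_tendsto (z q : ℕ → ℝ) (μ : ℝ) (hμ : 0 < μ)
    (hq0 : q 0 = 0)
    (hrec : ∀ n, q (n + 1) = max (q n + z n) 0)
    (hs : Tendsto (fun n : ℕ => (∑ k ∈ Finset.range n, z k) / n) atTop (𝓝 μ)) :
    Tendsto (fun n : ℕ => q n / n) atTop (𝓝 μ) := by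
  set s : ℕ → ℝ := fun n => ∑ k ∈ Finset.range n, z k with hs_def
  have hs0 : s 0 = 0 := by simp [hs_def]
  -- running minimum of the partial sums
  let m : ℕ → ℝ := fun n => Nat.rec (0 : ℝ) (fun k mk => min (s (k + 1)) mk) n
  have hm0 : m 0 = 0 := rfl
  have hm_succ : ∀ n, m (n + 1) = min (s (n + 1)) (m n) := fun n => rfl
  have hanti : Antitone m := antitone_nat_of_succ_le fun n => by
    rw [hm_succ]; exact min_le_right _ _
  have hm_le0 : ∀ n, m n ≤ 0 := fun n => by
    simpa [hm0] using hanti (Nat.zero_le n)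
  have hqsm : ∀ n, q n = s n - m n := by
    intro n
    induction n with
    | zero => simp [hq0, hs0, hm0]
    | succ n ih =>
      have hsucc : s (n + 1) = s n + z n := by
        simp [hs_def, Finset.sum_range_succ]
      rw [hrec n, ih, hm_succ n, hsucc]
      rcases le_total (m n) (s n + z n) with h | h
      · rw [min_eq_right h, max_eq_left (by linarith)]
        ring
      · rw [min_eq_left h, max_eq_right (by linarith)]
        ring
  -- eventual nonnegativity of s
  have h1 : ∀ᶠ n : ℕ in atTop, 0 < s n / n := hs.eventually (eventually_gt_nhds hμ)
  obtain ⟨N, hN⟩ := eventually_atTop.mp (h1.and (eventually_ge_atTop 1))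
  have hsN : ∀ n, N ≤ n → 0 ≤ s n := by
    intro n hn
    obtain ⟨hpos, hn1⟩ := hN n hn
    have hn' : (0 : ℝ) < n := by exact_mod_cast Nat.lt_of_lt_of_le Nat.zero_lt_one hn1
    have := mul_pos hpos hn'
    rw [div_mul_cancel₀ _ (ne_of_gt hn')] at this
    linarith
  set L : ℝ := min (m N) 0 with hL_def
  have hL0 : L ≤ 0 := min_le_right _ _
  have hL : ∀ n, L ≤ m n := by
    intro n
    induction n with
    | zero => simpa [hm0] using hL0
    | succ n ih =>
      rcases le_or_gt N (n + 1) with h | h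
      · rw [hm_succ]
        exact le_min (le_trans hL0 (hsN _ h)) ih
      · exact le_trans (min_le_left _ _) (hanti (by omega : n + 1 ≤ N))
  have hmn0 : Tendsto (fun n : ℕ => m n / n) atTop (𝓝 0) := by
    apply squeeze_zero_norm' ?_ (tendsto_const_div_atTop_nhds_zero_nat (-L))
    filter_upwards [eventually_ge_atTop 1] with n hn
    have hn' : (0 : ℝ) < n := by exact_mod_cast Nat.lt_of_lt_of_le Nat.zero_lt_one hn
    rw [Real.norm_eq_abs, abs_div, abs_of_pos hn']
    gcongr
    rw [abs_le]
    exact ⟨by linarith [hL n], by linarith [hm_le0 n]⟩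
  have heq : (fun n : ℕ => q n / n) = fun n : ℕ => s n / n - m n / n := by
    funext n
    rw [hqsm n, sub_div]
  rw [heq]
  simpa using hs.sub hmn0

/-- Instability of MaxWeight in the counterexample network: with Bernoulli arrival indicators
`A i n ∈ {0,1}` of rates `lam i` (all jointly independent), `lam 2 > (1 - lam 0)(1 - lam 1)`,
and the queue recursion `Q (n+1) = Q n + A 2 n - S n` where `S n = 1` exactly when
`Q n + A 2 n ≥ 1` and `A 0 n = 0` and `A 1 n = 0`, the queue is transient: almost surely
`Q n / n → lam 2 - (1 - lam 0)(1 - lam 1) > 0`, and in particular `Q n → ∞`. -/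
theorem maxweight_counterexample_queue_transient
    {Ω : Type*} [MeasurableSpace Ω] (P : Measure Ω) [IsProbabilityMeasure P]
    (lam : Fin 3 → ℝ) (hlam : ∀ i, 0 < lam i ∧ lam i < 1)
    (hunstable : (1 - lam 0) * (1 - lam 1) < lam 2)
    (A : Fin 3 → ℕ → Ω → ℕ)
    (hmeas : ∀ i n, Measurable (A i n))
    (hval : ∀ i n ω, A i n ω = 0 ∨ A i n ω = 1)
    (hindep : iIndepFun (fun p : Fin 3 × ℕ => A p.1 p.2) P)
    (hprob : ∀ i n, P {ω | A i n ω = 1} = ENNReal.ofReal (lam i))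
    (Q : ℕ → Ω → ℕ)
    (hQ0 : ∀ ω, Q 0 ω = 0)
    (hQrec : ∀ n ω, Q (n + 1) ω =
      Q n ω + A 2 n ω -
        (if 1 ≤ Q n ω + A 2 n ω ∧ A 0 n ω = 0 ∧ A 1 n ω = 0 then 1 else 0)) :
    0 < lam 2 - (1 - lam 0) * (1 - lam 1) ∧
    ∀ᵐ ω ∂P,
      Tendsto (fun n : ℕ => (Q n ω : ℝ) / (n : ℝ)) atTop
        (nhds (lam 2 - (1 - lam 0) * (1 - lam 1))) ∧
      Tendsto (fun n : ℕ => Q n ω) atTop atTop := by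
  classical
  have hpos : 0 < lam 2 - (1 - lam 0) * (1 - lam 1) := by linarith
  set g : (ℕ × ℕ) × ℕ → ℝ :=
    fun x => (x.2 : ℝ) - (if x.1.1 = 0 ∧ x.1.2 = 0 then 1 else 0) with hg_def
  have hg : Measurable g := measurable_of_countable g
  set T : ℕ → Ω → (ℕ × ℕ) × ℕ :=
    fun n ω => ((A 0 n ω, A 1 n ω), A 2 n ω) with hT_def
  have hTmeas : ∀ n, Measurable (T n) :=
    fun n => ((hmeas 0 n).prodMk (hmeas 1 n)).prodMk (hmeas 2 n)
  set X : ℕ → Ω → ℝ := fun n => g ∘ T n with hX_def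
  have hXmeas : ∀ n, Measurable (X n) := fun n => hg.comp (hTmeas n)
  have hXval : ∀ n ω,
      X n ω = (A 2 n ω : ℝ) - (if A 0 n ω = 0 ∧ A 1 n ω = 0 then 1 else 0) :=
    fun n ω => rfl
  -- laws of the marginals
  have law0 : ∀ (i : Fin 3) (n : ℕ),
      P {ω | A i n ω = 0} = ENNReal.ofReal (1 - lam i) := by
    intro i n
    have hc : {ω | A i n ω = 0} = {ω | A i n ω = 1}ᶜ := by
      ext ω
      simp only [Set.mem_setOf_eq, Set.mem_compl_iff]
      rcases hval i n ω with h | h <;> simp [h]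
    have hm1 : MeasurableSet {ω | A i n ω = 1} :=
      hmeas i n (measurableSet_singleton 1)
    rw [hc, measure_compl hm1 (measure_ne_top P _), hprob i n, measure_univ,
      ← ENNReal.ofReal_one, ← ENNReal.ofReal_sub _ (hlam i).1.le]
  have hmapA : ∀ (i : Fin 3) (n : ℕ), P.map (A i n) = P.map (A i 0) := by
    intro i n
    apply MeasureTheory.Measure.ext_of_singleton
    intro k
    rw [Measure.map_apply (hmeas i n) (measurableSet_singleton k),
        Measure.map_apply (hmeas i 0) (measurableSet_singleton k)]
    have hk : ∀ m : ℕ, P (A i m ⁻¹' {k}) =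
        if k = 1 then ENNReal.ofReal (lam i)
        else if k = 0 then ENNReal.ofReal (1 - lam i) else 0 := by
      intro m
      rcases Nat.lt_or_ge k 2 with h2 | h2
      · interval_cases k
        · rw [if_neg (by decide), if_pos rfl]; exact law0 i m
        · rw [if_pos rfl]; exact hprob i m
      · have hempty : A i m ⁻¹' {k} = ∅ := by
          ext ω
          simp only [Set.mem_preimage, Set.mem_singleton_iff, Set.mem_empty_iff_false,
            iff_false]
          rcases hval i m ω with h | h <;> omega
        rw [hempty, if_neg (by omega), if_neg (by omega)]
        simp
    rw [hk, hk]
  have hA01 : ∀ n, IndepFun (A 0 n) (A 1 n) P := by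
    intro n
    exact hindep.indepFun (by simp : ((0 : Fin 3), n) ≠ ((1 : Fin 3), n))
  have hmapPair : ∀ n, P.map (fun ω => (A 0 n ω, A 1 n ω)) =
      (P.map (A 0 n)).prod (P.map (A 1 n)) := fun n =>
    (indepFun_iff_map_prod_eq_prod_map_map (hmeas 0 n).aemeasurable
      (hmeas 1 n).aemeasurable).1 (hA01 n)
  have hPairA2 : ∀ n, IndepFun (fun ω => (A 0 n ω, A 1 n ω)) (A 2 n) P := by
    intro n
    exact hindep.indepFun_prodMk (fun p => hmeas p.1 p.2) (0, n) (1, n) (2, n)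
      (by simp) (by simp)
  have hmapT : ∀ n, P.map (T n) =
      ((P.map (A 0 n)).prod (P.map (A 1 n))).prod (P.map (A 2 n)) := by
    intro n
    have h := (indepFun_iff_map_prod_eq_prod_map_map
      ((hmeas 0 n).prodMk (hmeas 1 n)).aemeasurable
      (hmeas 2 n).aemeasurable).1 (hPairA2 n)
    rw [hmapPair n] at h
    exact h
  have hTident : ∀ n, IdentDistrib (T n) (T 0) P P := fun n =>
    ⟨(hTmeas n).aemeasurable, (hTmeas 0).aemeasurable, by
      rw [hmapT n, hmapT 0, hmapA 0 n, hmapA 1 n, hmapA 2 n]⟩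
  have hXident : ∀ n, IdentDistrib (X n) (X 0) P P := fun n => (hTident n).comp hg
  -- pairwise independence
  have hTindep : ∀ n m : ℕ, n ≠ m → IndepFun (T n) (T m) P := by
    intro n m hnm
    have hd : Disjoint ({((0 : Fin 3), n), (1, n), (2, n)} : Finset (Fin 3 × ℕ))
        {((0 : Fin 3), m), (1, m), (2, m)} := by
      simp only [Finset.disjoint_left, Finset.mem_insert, Finset.mem_singleton]
      rintro p (rfl | rfl | rfl) <;> simp [Prod.ext_iff, hnm]
    have base := hindep.indepFun_finset _ _ hd (fun p => hmeas p.1 p.2)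
    let u : ∀ j : ℕ,
        ((i : ({((0 : Fin 3), j), (1, j), (2, j)} : Finset (Fin 3 × ℕ))) → ℕ) →
          (ℕ × ℕ) × ℕ :=
      fun j v => ((v ⟨(0, j), by simp⟩, v ⟨(1, j), by simp⟩), v ⟨(2, j), by simp⟩)
    have hu : ∀ j, Measurable (u j) := fun j =>
      ((measurable_pi_apply _).prodMk (measurable_pi_apply _)).prodMk
        (measurable_pi_apply _)
    exact base.comp (hu n) (hu m)
  have hXindep : Pairwise (Function.onFun (IndepFun · · P) X) := fun n m hnm =>
    (hTindep n m hnm).comp hg hg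
  -- integrability
  have hXbdd : ∀ n ω, ‖X n ω‖ ≤ 2 := by
    intro n ω
    rw [hXval n ω, Real.norm_eq_abs]
    rcases hval 2 n ω with h | h <;> rw [h] <;> split_ifs <;> norm_num
  have hXint : ∀ n, Integrable (X n) P := fun n =>
    ⟨(hXmeas n).aestronglyMeasurable,
      HasFiniteIntegral.of_bounded (C := 2) (ae_of_all _ (hXbdd n))⟩
  -- expectation
  have hintA2 : ∫ ω, (A 2 0 ω : ℝ) ∂P = lam 2 := by
    have hm1 : MeasurableSet {ω | A 2 0 ω = 1} := hmeas 2 0 (measurableSet_singleton 1)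
    have heq : (fun ω => (A 2 0 ω : ℝ)) =
        Set.indicator {ω | A 2 0 ω = 1} (fun _ => (1 : ℝ)) := by
      funext ω
      rcases hval 2 0 ω with h | h <;>
        simp [Set.indicator_apply, Set.mem_setOf_eq, h]
    rw [heq, integral_indicator_const (1 : ℝ) hm1, measureReal_def, hprob 2 0,
      ENNReal.toReal_ofReal (hlam 2).1.le, smul_eq_mul, mul_one]
  have hintB : ∫ ω, (if A 0 0 ω = 0 ∧ A 1 0 ω = 0 then (1 : ℝ) else 0) ∂P =
      (1 - lam 0) * (1 - lam 1) := by
    have hmset : MeasurableSet {ω | A 0 0 ω = 0 ∧ A 1 0 ω = 0} :=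
      (hmeas 0 0 (measurableSet_singleton 0)).inter
        (hmeas 1 0 (measurableSet_singleton 0))
    have heq : (fun ω => (if A 0 0 ω = 0 ∧ A 1 0 ω = 0 then (1 : ℝ) else 0)) =
        Set.indicator {ω | A 0 0 ω = 0 ∧ A 1 0 ω = 0} (fun _ => (1 : ℝ)) := by
      funext ω
      by_cases h : A 0 0 ω = 0 ∧ A 1 0 ω = 0 <;>
        simp [Set.indicator_apply, Set.mem_setOf_eq, h]
    have hmul := (hA01 0).measure_inter_preimage_eq_mul {0} {0}
      (measurableSet_singleton 0) (measurableSet_singleton 0)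
    have hset2 : {ω | A 0 0 ω = 0 ∧ A 1 0 ω = 0} =
        A 0 0 ⁻¹' {0} ∩ A 1 0 ⁻¹' {0} := rfl
    have h00 : P (A 0 0 ⁻¹' {0}) = ENNReal.ofReal (1 - lam 0) := law0 0 0
    have h10 : P (A 1 0 ⁻¹' {0}) = ENNReal.ofReal (1 - lam 1) := law0 1 0
    rw [heq, integral_indicator_const (1 : ℝ) hmset, measureReal_def, hset2, hmul, h00, h10,
      ← ENNReal.ofReal_mul (by linarith [(hlam 0).2]),
      ENNReal.toReal_ofReal
        (by nlinarith [(hlam 0).2, (hlam 1).2] : (0:ℝ) ≤ (1 - lam 0) * (1 - lam 1)),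
      smul_eq_mul, mul_one]
  have hintA2' : Integrable (fun ω => (A 2 0 ω : ℝ)) P := by
    refine ⟨((measurable_of_countable (Nat.cast : ℕ → ℝ)).comp
      (hmeas 2 0)).aestronglyMeasurable, ?_⟩
    apply HasFiniteIntegral.of_bounded (C := 1)
    apply ae_of_all
    intro ω
    rcases hval 2 0 ω with h | h <;> simp [h]
  have hintB' : Integrable
      (fun ω => (if A 0 0 ω = 0 ∧ A 1 0 ω = 0 then (1 : ℝ) else 0)) P := by
    have hmset : MeasurableSet {ω | A 0 0 ω = 0 ∧ A 1 0 ω = 0} :=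
      (hmeas 0 0 (measurableSet_singleton 0)).inter
        (hmeas 1 0 (measurableSet_singleton 0))
    refine ⟨(Measurable.ite hmset measurable_const measurable_const).aestronglyMeasurable, ?_⟩
    apply HasFiniteIntegral.of_bounded (C := 1)
    apply ae_of_all
    intro ω
    by_cases h : A 0 0 ω = 0 ∧ A 1 0 ω = 0 <;> simp [h]
  have hintX : ∫ ω, X 0 ω ∂P = lam 2 - (1 - lam 0) * (1 - lam 1) := by
    have hX0 : X 0 = fun ω =>
        (A 2 0 ω : ℝ) - (if A 0 0 ω = 0 ∧ A 1 0 ω = 0 then (1 : ℝ) else 0) :=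
      funext fun ω => hXval 0 ω
    rw [hX0, integral_sub hintA2' hintB', hintA2, hintB]
  -- strong law of large numbers
  have hslln := strong_law_ae X (hXint 0) hXindep hXident
  rw [show (P[X 0]) = lam 2 - (1 - lam 0) * (1 - lam 1) from hintX] at hslln
  refine ⟨hpos, ?_⟩
  filter_upwards [hslln] with ω hω
  have hω' : Tendsto (fun n : ℕ => (∑ k ∈ Finset.range n, X k ω) / n) atTop
      (𝓝 (lam 2 - (1 - lam 0) * (1 - lam 1))) := by
    have heq2 : (fun n : ℕ => (∑ k ∈ Finset.range n, X k ω) / n) =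
        fun n : ℕ => (n : ℝ)⁻¹ • ∑ k ∈ Finset.range n, X k ω := by
      funext n
      rw [smul_eq_mul, inv_mul_eq_div]
    rw [heq2]
    exact hω
  -- pathwise recursion
  have hrecω : ∀ n, ((Q (n + 1) ω : ℝ)) = max ((Q n ω : ℝ) + X n ω) 0 := by
    intro n
    rw [hQrec n ω, hXval n ω]
    by_cases h : A 0 n ω = 0 ∧ A 1 n ω = 0
    · by_cases h1 : 1 ≤ Q n ω + A 2 n ω
      · rw [if_pos ⟨h1, h⟩, if_pos h]
        have hc : (↑(Q n ω + A 2 n ω - 1) : ℝ) = (Q n ω : ℝ) + (A 2 n ω : ℝ) - 1 := by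
          rw [Nat.cast_sub h1]
          push_cast
          ring
        have hge : (1 : ℝ) ≤ (Q n ω : ℝ) + (A 2 n ω : ℝ) := by exact_mod_cast h1
        rw [hc, max_eq_left (by linarith)]
        ring
      · have h0 : Q n ω = 0 ∧ A 2 n ω = 0 := by omega
        rw [if_neg (by tauto), if_pos h, h0.1, h0.2]
        norm_num
    · rw [if_neg (by tauto), if_neg h, sub_zero, Nat.sub_zero]
      push_cast
      rw [max_eq_left (by positivity)]
  have hq := lindley_tendsto (fun n => X n ω) (fun n => (Q n ω : ℝ))
    (lam 2 - (1 - lam 0) * (1 - lam 1)) hpos (by simp [hQ0]) hrecω hω'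
  refine ⟨hq, ?_⟩
  have h2 : Tendsto (fun n : ℕ => ((Q n ω : ℝ) / n) * n) atTop atTop :=
    Tendsto.pos_mul_atTop hpos hq tendsto_natCast_atTop_atTop
  have h3 : Tendsto (fun n : ℕ => (Q n ω : ℝ)) atTop atTop := by
    apply h2.congr'
    filter_upwards [eventually_ge_atTop 1] with n hn
    rw [div_mul_cancel₀]
    exact Nat.cast_ne_zero.mpr (by omega)
  exact tendsto_natCast_atTop_iff.mp h3
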